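/- Let G be a simple graph on a finite vertex set V, and let G* be the simple graph on V × {0,1,2} with adjacency: (u,i) adjacent to (v,j) iff either (u = v and {i,j} = {0,1}) or (G.Adj u v and {i,j} = {1,2}). For a set S of vertices of a simple graph H, define spread(H, S) = S ∪ { w : ∃ z ∈ S, H.Adj w z }. Then for every C ⊆ V: spread(G*, (V × {0}) ∪ ((V ∖ C) × {1})) = (V × {0}) ∪ (V × {1}) ∪ (D × {2}), where D = { v ∈ V : ∃ u, G.Adj u v and u ∉ C }; moreover, if C is a vertex cover of G, then D ⊆ C, so the cardinality of this spread set is at most 2·|V| + |C|. -/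

import Mathlib

/-- The graph `G*` from the NP-hardness reduction: vertices are `V × {0,1,2}`;
`(u,i)` is adjacent to `(v,j)` iff either `u = v` and `{i,j} = {0,1}`, or
`G.Adj u v` and `{i,j} = {1,2}`. -/
def Gstar {V : Type*} (G : SimpleGraph V) : SimpleGraph (V × Fin 3) where
  Adj a b :=
    (a.1 = b.1 ∧ ((a.2 = 0 ∧ b.2 = 1) ∨ (a.2 = 1 ∧ b.2 = 0)))
    ∨ (G.Adj a.1 b.1 ∧ ((a.2 = 1 ∧ b.2 = 2) ∨ (a.2 = 2 ∧ b.2 = 1)))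
  symm := by
    constructor
    rintro a b (⟨h1, h2 | h2⟩ | ⟨h1, h2 | h2⟩)
    · exact Or.inl ⟨h1.symm, Or.inr ⟨h2.2, h2.1⟩⟩
    · exact Or.inl ⟨h1.symm, Or.inl ⟨h2.2, h2.1⟩⟩
    · exact Or.inr ⟨h1.symm, Or.inr ⟨h2.2, h2.1⟩⟩
    · exact Or.inr ⟨h1.symm, Or.inl ⟨h2.2, h2.1⟩⟩
  loopless := by
    constructor
    rintro a (⟨h1, ⟨h2, h3⟩ | ⟨h2, h3⟩⟩ | ⟨h1, ⟨h2, h3⟩ | ⟨h2, h3⟩⟩)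
    · rw [h2] at h3; exact absurd h3 (by decide)
    · rw [h2] at h3; exact absurd h3 (by decide)
    · exact G.loopless.irrefl a.1 h1
    · exact G.loopless.irrefl a.1 h1

/-- One step of deterministic SIS spread (α = 1, c = 0): the infected set together with
all neighbors of infected nodes. -/
def spread {W : Type*} (H : SimpleGraph W) (S : Set W) : Set W :=
  S ∪ {w | ∃ z ∈ S, H.Adj w z}


lemma ncard_prod_singleton {V : Type*} (A : Set V) (x : Fin 3) :
    (A ×ˢ ({x} : Set (Fin 3))).ncard = A.ncard := by
  have : A ×ˢ ({x} : Set (Fin 3)) = (fun v => (v, x)) '' A := by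
    ext ⟨a, b⟩; simp [eq_comm, and_comm]
  rw [this, Set.ncard_image_of_injective _ (fun a b h => by simpa using h)]

/-- starting from infected set `(V × {0}) ∪ ((V ∖ C) × {1})` (the state at
time 1 after screening the `V₁`-copies of `C`), one step of deterministic spread in `G*`
yields exactly `(V × {0}) ∪ (V × {1}) ∪ (D × {2})` where
`D = {v | ∃ u, G.Adj u v ∧ u ∉ C}`; moreover if `C` is a vertex cover of `G` then
`D ⊆ C`, so this spread set has cardinality at most `2·|V| + |C|`. -/
theorem spread_after_screening_cover
    {V : Type*} [Fintype V] (G : SimpleGraph V) (C : Set V) :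
    (spread (Gstar G)
        (((Set.univ : Set V) ×ˢ ({0} : Set (Fin 3))) ∪ (Cᶜ ×ˢ ({1} : Set (Fin 3))))
      = ((Set.univ : Set V) ×ˢ ({0} : Set (Fin 3)))
        ∪ ((Set.univ : Set V) ×ˢ ({1} : Set (Fin 3)))
        ∪ ({v : V | ∃ u, G.Adj u v ∧ u ∉ C} ×ˢ ({2} : Set (Fin 3))))
    ∧ ((∀ u v, G.Adj u v → u ∈ C ∨ v ∈ C) →
        {v : V | ∃ u, G.Adj u v ∧ u ∉ C} ⊆ C
        ∧ (spread (Gstar G)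
            (((Set.univ : Set V) ×ˢ ({0} : Set (Fin 3)))
              ∪ (Cᶜ ×ˢ ({1} : Set (Fin 3))))).ncard
            ≤ 2 * Fintype.card V + C.ncard) := by
  classical
  have heq : (spread (Gstar G)
        (((Set.univ : Set V) ×ˢ ({0} : Set (Fin 3))) ∪ (Cᶜ ×ˢ ({1} : Set (Fin 3))))
      = ((Set.univ : Set V) ×ˢ ({0} : Set (Fin 3)))
        ∪ ((Set.univ : Set V) ×ˢ ({1} : Set (Fin 3)))
        ∪ ({v : V | ∃ u, G.Adj u v ∧ u ∉ C} ×ˢ ({2} : Set (Fin 3)))) := by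
    ext ⟨v, i⟩
    simp only [spread, Gstar, Set.mem_union, Set.mem_prod, Set.mem_univ, Set.mem_singleton_iff,
      Set.mem_setOf_eq, Set.mem_compl_iff, true_and]
    constructor
    · rintro ((hi | ⟨hv, hi⟩) | ⟨⟨u, j⟩, hz, hadj⟩)
      · exact Or.inl (Or.inl hi)
      · exact Or.inl (Or.inr hi)
      · simp only at hadj
        rcases hz with hj | ⟨hu, hj⟩ <;> subst hj
        · rcases hadj with ⟨_, ⟨_, h⟩ | ⟨hi, _⟩⟩ | ⟨_, ⟨_, h⟩ | ⟨_, h⟩⟩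
          · exact absurd h (by decide)
          · exact Or.inl (Or.inr hi)
          · exact absurd h (by decide)
          · exact absurd h (by decide)
        · rcases hadj with ⟨_, ⟨hi, _⟩ | ⟨_, h⟩⟩ | ⟨ha, ⟨_, h⟩ | ⟨hi, _⟩⟩
          · exact Or.inl (Or.inl hi)
          · exact absurd h (by decide)
          · exact absurd h (by decide)
          · exact Or.inr ⟨⟨u, ha.symm, hu⟩, hi⟩
    · rintro ((hi | hi) | ⟨⟨u, hadj, hu⟩, hi⟩)
      · exact Or.inl (Or.inl hi)
      · by_cases hv : v ∈ C
        · exact Or.inr ⟨(v, 0), Or.inl rfl, Or.inl ⟨rfl, Or.inr ⟨hi, rfl⟩⟩⟩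
        · exact Or.inl (Or.inr ⟨hv, hi⟩)
      · exact Or.inr ⟨(u, 1), Or.inr ⟨hu, rfl⟩, Or.inr ⟨hadj.symm, Or.inr ⟨hi, rfl⟩⟩⟩
  refine ⟨heq, fun hcov => ?_⟩
  have hD : {v : V | ∃ u, G.Adj u v ∧ u ∉ C} ⊆ C := by
    rintro v ⟨u, hadj, hu⟩
    rcases hcov u v hadj with h | h
    · exact absurd h hu
    · exact h
  refine ⟨hD, ?_⟩
  rw [heq]
  calc (((Set.univ : Set V) ×ˢ ({0} : Set (Fin 3)))
        ∪ ((Set.univ : Set V) ×ˢ ({1} : Set (Fin 3)))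
        ∪ ({v : V | ∃ u, G.Adj u v ∧ u ∉ C} ×ˢ ({2} : Set (Fin 3)))).ncard
      ≤ (((Set.univ : Set V) ×ˢ ({0} : Set (Fin 3)))
        ∪ ((Set.univ : Set V) ×ˢ ({1} : Set (Fin 3)))).ncard
        + ({v : V | ∃ u, G.Adj u v ∧ u ∉ C} ×ˢ ({2} : Set (Fin 3))).ncard :=
        Set.ncard_union_le _ _
    _ ≤ ((Set.univ : Set V) ×ˢ ({0} : Set (Fin 3))).ncard
        + ((Set.univ : Set V) ×ˢ ({1} : Set (Fin 3))).ncard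
        + ({v : V | ∃ u, G.Adj u v ∧ u ∉ C} ×ˢ ({2} : Set (Fin 3))).ncard := by
        gcongr; exact Set.ncard_union_le _ _
    _ ≤ 2 * Fintype.card V + C.ncard := by
        rw [ncard_prod_singleton, ncard_prod_singleton, ncard_prod_singleton,
          Set.ncard_univ, Nat.card_eq_fintype_card]
        have := Set.ncard_le_ncard hD C.toFinite
        omega
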